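/- Let α_n = ∑_{j=0}^{n-1} r_j² − log(n)/π with r_j = C(2j,j)/4^j (r_0 = 1), and let α_∞ = lim α_n. Then for every n ≥ 1, 0 ≤ α_∞ − α_n ≤ 1/(5n). -/

import Mathlib

open Real Filter

noncomputable def r (n : ℕ) : ℝ := (Nat.choose (2 * n) n : ℝ) / 4 ^ n

noncomputable def α (n : ℕ) : ℝ := (∑ j ∈ Finset.range n, (r j) ^ 2) - Real.log n / π

open Topology Set

lemma r_pos (n : ℕ) : 0 < r n := by
  have h : 0 < Nat.choose (2 * n) n := Nat.choose_pos (by omega)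
  unfold r; positivity

lemma choose_eq (n : ℕ) : (Nat.choose (2 * n) n : ℝ) * n.factorial * n.factorial
    = (2 * n).factorial := by
  have := Nat.choose_mul_factorial_mul_factorial (show n ≤ 2 * n by omega)
  rw [show 2 * n - n = n by omega] at this
  exact_mod_cast congrArg (Nat.cast : ℕ → ℝ) this

lemma W_r (n : ℕ) : Real.Wallis.W n * ((2 * n + 1) * r n ^ 2) = 1 := by
  have hc := choose_eq n
  have hf : (0:ℝ) < (n.factorial : ℝ) := by positivity
  have h4 : ((4:ℝ)) ^ n = 2 ^ (2 * n) := by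
    rw [show (4:ℝ) = 2 ^ 2 by norm_num, ← pow_mul]
  have hfac : (((2*n).factorial : ℝ))^2
      = ((Nat.choose (2 * n) n : ℝ) * n.factorial * n.factorial)^2 := by rw [hc]
  have h21 : (0:ℝ) < 2 * n + 1 := by positivity
  rw [Real.Wallis.W_eq_factorial_ratio, r, h4]
  field_simp
  rw [hfac, show 4 * n = 2 * n + 2 * n by ring, pow_add]
  ring

lemma r_sq_eq (n : ℕ) : r n ^ 2 = 1 / ((2 * n + 1) * Real.Wallis.W n) := by
  have h := W_r n
  have hW := Real.Wallis.W_pos n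
  have h21 : (0:ℝ) < 2 * n + 1 := by positivity
  field_simp
  linarith [h]

lemma r_sq_ub (n : ℕ) : π * r n ^ 2 ≤ (4 * n + 4) / (2 * n + 1) ^ 2 := by
  have h := Real.Wallis.le_W n
  have hW := Real.Wallis.W_pos n
  have h21 : (0:ℝ) < 2 * n + 1 := by positivity
  have h22 : (0:ℝ) < 2 * n + 2 := by positivity
  rw [r_sq_eq, mul_one_div, div_le_div_iff₀ (by positivity) (by positivity)]
  have hπ := Real.pi_pos
  have h' : (2*(n:ℝ)+1) * (π/2) ≤ (2*(n:ℝ)+2) * Wallis.W n := by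
    rw [div_mul_eq_mul_div, div_le_iff₀ h22] at h
    linarith
  nlinarith [mul_le_mul_of_nonneg_left h' (le_of_lt h21)]

lemma r_succ (n : ℕ) : r (n + 1) = r n * ((2 * n + 1) / (2 * n + 2)) := by
  have h := Nat.succ_mul_centralBinom_succ n
  have hcast : ((n:ℝ) + 1) * (Nat.choose (2 * (n+1)) (n+1) : ℝ)
      = 2 * (2 * n + 1) * (Nat.choose (2 * n) n : ℝ) := by
    have := congrArg (Nat.cast : ℕ → ℝ) h
    push_cast at this
    simpa [Nat.centralBinom] using this
  have hn1 : ((n:ℝ) + 1) ≠ 0 := by positivity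
  unfold r
  rw [pow_succ]
  have h4 : ((4:ℝ)) ^ n ≠ 0 := by positivity
  field_simp
  linear_combination (2:ℝ) * hcast

lemma tendsto_e : Tendsto (fun k : ℕ => (2 * (k:ℝ) + 1) * r k ^ 2) atTop (𝓝 (2 / π)) := by
  have h := Real.Wallis.tendsto_W_nhds_pi_div_two
  have h2 : Tendsto (fun k : ℕ => (Real.Wallis.W k)⁻¹) atTop (𝓝 ((π/2)⁻¹)) :=
    h.inv₀ (by positivity)
  have heq : ∀ k : ℕ, (Real.Wallis.W k)⁻¹ = (2 * (k:ℝ) + 1) * r k ^ 2 := by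
    intro k
    have hW := Real.Wallis.W_pos k
    have h21 : (0:ℝ) < 2 * k + 1 := by positivity
    rw [r_sq_eq]
    field_simp
  have : ((π/2):ℝ)⁻¹ = 2 / π := by
    rw [inv_div]
  rw [this] at h2
  exact h2.congr heq

noncomputable def d (k : ℕ) : ℝ := π * r k ^ 2 * ((k:ℝ) + 1/3)

lemma tendsto_d : Tendsto d atTop (𝓝 1) := by
  have h1 : Tendsto (fun k : ℕ => ((k:ℝ) + 1/3) / (2 * (k:ℝ) + 1)) atTop (𝓝 (1/2)) := by
    have hz : Tendsto (fun k : ℕ => (1:ℝ)/6 * (1 / (2 * (k:ℝ) + 1))) atTop (𝓝 (1/6 * 0)) := by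
      refine Tendsto.const_mul _ (tendsto_const_nhds.div_atTop ?_)
      exact Tendsto.atTop_add (tendsto_natCast_atTop_atTop.const_mul_atTop two_pos)
        tendsto_const_nhds
    have := (tendsto_const_nhds (x := (1:ℝ)/2) (f := atTop (α := ℕ))).sub hz
    rw [mul_zero, sub_zero] at this
    refine this.congr fun k => ?_
    have h21 : (0:ℝ) < 2 * (k:ℝ) + 1 := by positivity
    field_simp
    ring
  have h2 := (tendsto_e.mul h1).const_mul π
  have hπ := Real.pi_pos
  have : π * (2 / π * (1/2)) = 1 := by field_simp
  rw [this] at h2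
  refine h2.congr fun k => ?_
  have h21 : (0:ℝ) < 2 * (k:ℝ) + 1 := by positivity
  unfold d
  field_simp

lemma d_antitone : Antitone d := by
  refine antitone_nat_of_succ_le fun k => ?_
  unfold d
  rw [r_succ]
  have hr := r_pos k
  have h21 : (0:ℝ) < 2 * k + 1 := by positivity
  have h22 : (0:ℝ) < 2 * k + 2 := by positivity
  have hπ := Real.pi_pos
  push_cast
  rw [mul_pow, div_pow]
  have key : (2*(k:ℝ)+1)^2 * ((k:ℝ)+1+1/3) ≤ (2*(k:ℝ)+2)^2 * ((k:ℝ)+1/3) := by nlinarith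
  have h' : π * (r k ^ 2 * ((2 * (k:ℝ) + 1) ^ 2 / (2 * (k:ℝ) + 2) ^ 2)) * ((k:ℝ) + 1 + 1/3)
      = (π * r k ^ 2 * ((2*(k:ℝ)+1)^2 * ((k:ℝ)+1+1/3))) / (2*(k:ℝ)+2)^2 := by ring
  rw [h', div_le_iff₀ (by positivity)]
  nlinarith [mul_le_mul_of_nonneg_left key (by positivity : (0:ℝ) ≤ π * r k ^ 2)]

lemma d_ge_one (k : ℕ) : 1 ≤ d k :=
  le_of_tendsto tendsto_d (Filter.eventually_atTop.mpr ⟨k, fun j hj => d_antitone hj⟩)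

lemma log_lb {x : ℝ} (hx : 1 ≤ x) : 2 * (x - 1) / (x + 1) ≤ Real.log x := by
  set f : ℝ → ℝ := fun y => Real.log y - 2 * (y - 1) / (y + 1) with hf
  have hmono : MonotoneOn f (Ici 1) := by
    have hderiv : ∀ y ∈ interior (Ici (1:ℝ)),
        HasDerivAt f (1/y - (2 * 1 * (y + 1) - 2 * (y - 1) * 1) / (y + 1) ^ 2) y := by
      intro y hy
      rw [interior_Ici, mem_Ioi] at hy
      have hy0 : y ≠ 0 := by linarith
      have hy1 : y + 1 ≠ 0 := by linarith
      have h1 : HasDerivAt Real.log (1/y) y := by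
        simpa [one_div] using Real.hasDerivAt_log hy0
      have h2 : HasDerivAt (fun y : ℝ => 2 * (y - 1) / (y + 1))
          ((2 * 1 * (y + 1) - 2 * (y - 1) * 1) / (y + 1) ^ 2) y := by
        exact (((hasDerivAt_id' y).sub_const 1).const_mul 2).div
          ((hasDerivAt_id' y).add_const 1) hy1
      exact h1.sub h2
    apply monotoneOn_of_deriv_nonneg (convex_Ici 1)
    · apply ContinuousOn.sub
      · exact fun y hy =>
          (Real.continuousAt_log (by rw [mem_Ici] at hy; linarith)).continuousWithinAt
      · apply ContinuousOn.div
        · fun_prop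
        · fun_prop
        · intro y hy; rw [mem_Ici] at hy; intro hc; first | linarith | (simp only [id] at hc; linarith)
    · intro y hy
      exact (hderiv y hy).differentiableAt.differentiableWithinAt
    · intro y hy
      rw [(hderiv y hy).deriv]
      rw [interior_Ici, mem_Ioi] at hy
      have hy0 : (0:ℝ) < y := by linarith
      rw [sub_nonneg, div_le_div_iff₀ (by positivity) (by positivity)]
      nlinarith [sq_nonneg (y - 1)]
  have h0 : f 1 ≤ f x := hmono (mem_Ici.mpr le_rfl) (mem_Ici.mpr hx) hx
  simp only [hf] at h0
  norm_num at h0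
  linarith

lemma log_ub {x : ℝ} (hx : 1 ≤ x) : Real.log x ≤ (x - 1/x) / 2 := by
  set f : ℝ → ℝ := fun y => (y - 1/y) / 2 - Real.log y with hf
  have hmono : MonotoneOn f (Ici 1) := by
    have hderiv : ∀ y ∈ interior (Ici (1:ℝ)),
        HasDerivAt f ((1 - (-1/y^2)) / 2 - 1/y) y := by
      intro y hy
      rw [interior_Ici, mem_Ioi] at hy
      have hy0 : y ≠ 0 := by linarith
      have h1 : HasDerivAt Real.log (1/y) y := by
        simpa [one_div] using Real.hasDerivAt_log hy0
      have hinv : HasDerivAt (fun y : ℝ => 1/y) (-1/y^2) y := by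
        simp only [one_div]; exact (hasDerivAt_id' y).inv hy0
      exact (((hasDerivAt_id y).sub hinv).div_const 2).sub h1
    apply monotoneOn_of_deriv_nonneg (convex_Ici 1)
    · apply ContinuousOn.sub
      · apply ContinuousOn.div_const
        apply ContinuousOn.sub continuousOn_id
        apply ContinuousOn.div continuousOn_const continuousOn_id
        intro y hy; rw [mem_Ici] at hy; intro hc; first | linarith | (simp only [id] at hc; linarith)
      · exact fun y hy =>
          (Real.continuousAt_log (by rw [mem_Ici] at hy; linarith)).continuousWithinAt
    · intro y hy
      exact (hderiv y hy).differentiableAt.differentiableWithinAt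
    · intro y hy
      rw [(hderiv y hy).deriv]
      rw [interior_Ici, mem_Ioi] at hy
      have hy0 : (0:ℝ) < y := by linarith
      have key : (1 - (-1/y^2)) / 2 - 1/y = (y-1)^2 / (2*y^2) := by
        field_simp
        ring
      rw [key]
      positivity
  have h0 : f 1 ≤ f x := hmono (mem_Ici.mpr le_rfl) (mem_Ici.mpr hx) hx
  simp only [hf] at h0
  norm_num at h0
  rw [inv_eq_one_div] at h0
  linarith

lemma log_succ_sub (k : ℕ) (hk : 1 ≤ k) :
    Real.log (k+1) - Real.log k = Real.log (((k:ℝ)+1)/k) := by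
  have hk0 : (0:ℝ) < k := by exact_mod_cast hk
  rw [Real.log_div (by positivity) (by positivity)]

lemma step_lb (k : ℕ) (hk : 1 ≤ k) :
    Real.log ((k:ℝ)+1) - Real.log k ≤ π * r k ^ 2 := by
  have hk0 : (0:ℝ) < k := by exact_mod_cast hk
  have hk1 : (1:ℝ) ≤ k := by exact_mod_cast hk
  rw [log_succ_sub k hk]
  have hx : (1:ℝ) ≤ ((k:ℝ)+1)/k := by
    rw [le_div_iff₀ hk0]; linarith
  have h1 := log_ub hx
  have h2 : (((k:ℝ)+1)/k - 1/(((k:ℝ)+1)/k)) / 2 = (2*k+1) / (2*k*(k+1)) := by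
    rw [one_div_div]
    field_simp
    ring
  rw [h2] at h1
  have h3 : (2*(k:ℝ)+1) / (2*k*(k+1)) ≤ 3 / (3*k+1) := by
    rw [div_le_div_iff₀ (by positivity) (by positivity)]
    nlinarith
  have h4 : 3 / (3*(k:ℝ)+1) ≤ π * r k ^ 2 := by
    have hd := d_ge_one k
    simp only [d] at hd
    rw [div_le_iff₀ (by positivity)]
    nlinarith [Real.pi_pos, sq_nonneg (r k), r_pos k]
  linarith

lemma step_ub (k : ℕ) (hk : 1 ≤ k) :
    π * r k ^ 2 - (Real.log ((k:ℝ)+1) - Real.log k) ≤ (1/2) * (1/k - 1/(k+1)) := by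
  have hk0 : (0:ℝ) < k := by exact_mod_cast hk
  rw [log_succ_sub k hk]
  have hx : (1:ℝ) ≤ ((k:ℝ)+1)/k := by
    rw [le_div_iff₀ hk0]; linarith
  have h1 := log_lb hx
  have h2 : 2 * (((k:ℝ)+1)/k - 1) / (((k:ℝ)+1)/k + 1) = 2/(2*k+1) := by
    rw [div_eq_div_iff (by positivity) (by positivity)]
    field_simp
    ring
  rw [h2] at h1
  have h3 := r_sq_ub k
  have h4 : (4*(k:ℝ)+4)/(2*k+1)^2 - 2/(2*k+1) ≤ (1/2) * (1/k - 1/(k+1)) := by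
    have e1 : (4*(k:ℝ)+4)/(2*k+1)^2 - 2/(2*k+1) = 2/(2*k+1)^2 := by
      field_simp
      ring
    have e2 : (1/2) * (1/(k:ℝ) - 1/(k+1)) = 1/(2*k*(k+1)) := by
      field_simp
      ring
    rw [e1, e2, div_le_div_iff₀ (by positivity) (by positivity)]
    nlinarith
  linarith

theorem alpha_rate (αinf : ℝ) (h : Tendsto α atTop (nhds αinf)) (n : ℕ) (hn : 1 ≤ n) :
    0 ≤ αinf - α n ∧ αinf - α n ≤ 1 / (5 * n) := by
  have hπ := Real.pi_pos
  have hn0 : (0:ℝ) < n := by exact_mod_cast hn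
  have hinc : ∀ N : ℕ, α (N+1) = α N + (r N ^ 2 - (Real.log ((N:ℝ)+1) - Real.log N)/π) := by
    intro N
    unfold α
    rw [Finset.sum_range_succ]
    push_cast
    ring
  have key : ∀ N, n ≤ N → α n ≤ α N ∧ α N ≤ α n + 1/(2*π) * (1/(n:ℝ) - 1/(N:ℝ)) := by
    intro N hN
    induction N, hN using Nat.le_induction with
    | base => constructor <;> simp
    | succ N hN ih =>
      have hN1 : 1 ≤ N := le_trans hn hN
      have hN0 : (0:ℝ) < N := by exact_mod_cast hN1
      have hlb := step_lb N hN1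
      have hub := step_ub N hN1
      have hstep_lb : 0 ≤ r N ^ 2 - (Real.log ((N:ℝ)+1) - Real.log N)/π := by
        rw [sub_nonneg, div_le_iff₀ hπ]
        nlinarith
      have hstep_ub : r N ^ 2 - (Real.log ((N:ℝ)+1) - Real.log N)/π
          ≤ 1/(2*π) * (1/(N:ℝ) - 1/((N:ℝ)+1)) := by
        have e : r N ^ 2 - (Real.log ((N:ℝ)+1) - Real.log N)/π
            = (π * r N ^ 2 - (Real.log ((N:ℝ)+1) - Real.log N)) / π := by
          field_simp
        have e' : 1/(2*π) * (1/(N:ℝ) - 1/((N:ℝ)+1))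
            = ((1/2) * (1/(N:ℝ) - 1/((N:ℝ)+1))) / π := by ring
        rw [e, e']
        gcongr
      constructor
      · rw [hinc N]; linarith [ih.1]
      · rw [hinc N]
        push_cast
        have := ih.2
        linarith
  constructor
  · have hle : α n ≤ αinf := by
      refine ge_of_tendsto h (Filter.eventually_atTop.mpr ⟨n, fun N hN => (key N hN).1⟩)
    linarith
  · have hle : αinf ≤ α n + 1/(2*π) * (1/(n:ℝ)) := by
      refine le_of_tendsto h (Filter.eventually_atTop.mpr ⟨n, fun N hN => ?_⟩)
      have hN0 : (0:ℝ) < N := by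
        have : 1 ≤ N := le_trans hn hN
        exact_mod_cast this
      have := (key N hN).2
      have h1N : (0:ℝ) < 1/(N:ℝ) := by positivity
      have hd : 1/(2*π) * (1/(n:ℝ) - 1/(N:ℝ)) ≤ 1/(2*π) * (1/(n:ℝ)) := by
        apply mul_le_mul_of_nonneg_left (by linarith) (by positivity)
      linarith
    have h5 : 1/(2*π) * (1/(n:ℝ)) ≤ 1 / (5*n) := by
      rw [div_mul_div_comm, one_mul, div_le_div_iff₀ (by positivity) (by positivity)]
      nlinarith [Real.pi_gt_three]
    linarith
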